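/- For all integers a, m, l with 1 ≤ a, m ≤ l, the coefficients c_{a,m}^{(l)} = Σ_{h=1}^{a} (−1)^{h−1}·C(m−1,h−1)·C(l−m,a−h) satisfy the orthogonality/inversion relation: Σ_{a+b=r+1, a,b≥1} c_{m,a}^{(r)}·c_{a,m'}^{(r)} = 2^{r−1}·δ_{m,m'} for 1 ≤ m, m' ≤ r, where δ is the Kronecker delta. -/

import Mathlib

open Polynomial Finset

/-- `c_{a,m}^{(l)} = Σ_{h=1}^{a} (−1)^{h−1}·C(m−1,h−1)·C(l−m,a−h)`, where `C(n,k)`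
is the binomial coefficient (equal to `0` when `k > n`). -/
def cCoeff (a m l : ℕ) : ℤ :=
  ∑ h ∈ Finset.Icc 1 a,
    (-1) ^ (h - 1) * (Nat.choose (m - 1) (h - 1) : ℤ) * (Nat.choose (l - m) (a - h) : ℤ)

lemma coeff_one_sub_X_pow (n k : ℕ) :
    ((1 - X : ℚ[X]) ^ n).coeff k = (-1) ^ k * (n.choose k : ℚ) := by
  have h : (1 - X : ℚ[X]) = C (-1) * (X + C (-1)) := by
    simp [mul_add]; ring
  rw [h, mul_pow, ← C_pow, coeff_C_mul, coeff_X_add_C_pow]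
  rcases le_or_gt k n with hk | hk
  · have h2 : (-1 : ℚ) ^ (n - k) * (-1) ^ k = (-1) ^ n := by
      rw [← pow_add]; congr 1; omega
    calc (-1 : ℚ) ^ n * ((-1) ^ (n - k) * (n.choose k : ℚ))
        = ((-1) ^ (n - k) * (-1) ^ k) * ((-1) ^ (n - k) * (n.choose k : ℚ)) := by rw [h2]
      _ = ((-1) ^ (n - k) * (-1) ^ (n - k)) * ((-1) ^ k * (n.choose k : ℚ)) := by ring
      _ = (-1) ^ k * (n.choose k : ℚ) := by
          rw [← pow_add, Even.neg_one_pow ⟨n - k, by omega⟩, one_mul]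
  · simp [Nat.choose_eq_zero_of_lt hk]

/-- `cCoeff a m l` is the coefficient of `x^(a-1)` in `(1-x)^(m-1)·(1+x)^(l-m)`. -/
lemma cCoeff_eq_coeff (a m l : ℕ) (ha : 1 ≤ a) :
    ((cCoeff a m l : ℚ)) = (((1 - X) ^ (m - 1) * (1 + X) ^ (l - m) : ℚ[X])).coeff (a - 1) := by
  rw [coeff_mul, Finset.Nat.sum_antidiagonal_eq_sum_range_succ_mk]
  rw [show (a - 1).succ = a from by omega]
  unfold cCoeff
  push_cast
  rw [← Finset.Ico_add_one_right_eq_Icc, Finset.sum_Ico_eq_sum_range]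
  rw [show a + 1 - 1 = a from rfl]
  refine Finset.sum_congr rfl fun i hi => ?_
  rw [coeff_one_sub_X_pow, coeff_one_add_X_pow]
  have h1 : 1 + i - 1 = i := by omega
  have h2 : a - (1 + i) = a - 1 - i := by omega
  rw [h1, h2]

/-- Expansion of `(1-X)^(m'-1)·(1+X)^(r-m')` in terms of its coefficients. -/
lemma expand_poly (m' r : ℕ) (h1 : 1 ≤ m') (h2 : m' ≤ r) :
    ((1 - X) ^ (m' - 1) * (1 + X) ^ (r - m') : ℚ[X])
      = ∑ a ∈ Finset.Icc 1 r, C ((cCoeff a m' r : ℚ)) * X ^ (a - 1) := by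
  have hA : ((1 - X : ℚ[X])).natDegree ≤ 1 := (natDegree_sub_le _ _).trans (by simp)
  have hB : ((1 + X : ℚ[X])).natDegree ≤ 1 := (natDegree_add_le _ _).trans (by simp)
  have hdeg : (((1 - X) ^ (m' - 1) * (1 + X) ^ (r - m') : ℚ[X])).natDegree < r := by
    calc (((1 - X) ^ (m' - 1) * (1 + X) ^ (r - m') : ℚ[X])).natDegree
        ≤ ((1 - X : ℚ[X]) ^ (m' - 1)).natDegree + ((1 + X : ℚ[X]) ^ (r - m')).natDegree :=
          natDegree_mul_le
      _ ≤ (m' - 1) * 1 + (r - m') * 1 :=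
          add_le_add (natDegree_pow_le.trans (Nat.mul_le_mul_left _ hA))
            (natDegree_pow_le.trans (Nat.mul_le_mul_left _ hB))
      _ < r := by omega
  conv_lhs => rw [Polynomial.as_sum_range' _ r hdeg]
  rw [← Finset.Ico_add_one_right_eq_Icc, Finset.sum_Ico_eq_sum_range,
    show r + 1 - 1 = r from rfl]
  refine Finset.sum_congr rfl fun i hi => ?_
  rw [cCoeff_eq_coeff (1 + i) m' r (by omega)]
  rw [show 1 + i - 1 = i from by omega, ← C_mul_X_pow_eq_monomial]

/-- Key polynomial identity. -/
lemma key_poly (m' r : ℕ) (h1 : 1 ≤ m') (h2 : m' ≤ r) :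
    (∑ a ∈ Finset.Icc 1 r, C ((cCoeff a m' r : ℚ)) * ((1 - X) ^ (a - 1) * (1 + X) ^ (r - a))
      : ℚ[X]) = C ((2 : ℚ) ^ (r - 1)) * X ^ (m' - 1) := by
  apply eq_of_infinite_eval_eq
  apply Set.Infinite.mono (s := {x : ℚ | x ≠ -1})
  swap
  · exact Set.Infinite.mono (fun x hx => hx) (Set.Finite.infinite_compl (Set.finite_singleton (-1)))
  intro x hx
  simp only [Set.mem_setOf_eq] at hx
  have hu : (1 : ℚ) + x ≠ 0 := by
    intro h; apply hx; linarith
  set u : ℚ := 1 + x with hu_def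
  set y : ℚ := (1 - x) / u with hy_def
  have hxy : (1 : ℚ) - x = y * u := by rw [hy_def, div_mul_cancel₀ _ hu]
  have h1y : (1 : ℚ) - y = 2 * x / u := by
    rw [hy_def]; field_simp; ring
  have h2y : (1 : ℚ) + y = 2 / u := by
    rw [hy_def]; field_simp; ring
  -- evaluate the expansion at y
  have hQ : (1 - y) ^ (m' - 1) * (1 + y) ^ (r - m')
      = ∑ a ∈ Finset.Icc 1 r, (cCoeff a m' r : ℚ) * y ^ (a - 1) := by
    have := congrArg (Polynomial.eval y) (expand_poly m' r h1 h2)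
    simpa [eval_finset_sum] using this
  have hsum : ∑ a ∈ Finset.Icc 1 r,
      (cCoeff a m' r : ℚ) * ((1 - x) ^ (a - 1) * (1 + x) ^ (r - a))
      = (∑ a ∈ Finset.Icc 1 r, (cCoeff a m' r : ℚ) * y ^ (a - 1)) * u ^ (r - 1) := by
    rw [Finset.sum_mul]
    refine Finset.sum_congr rfl fun a ha => ?_
    rw [Finset.mem_Icc] at ha
    rw [hxy, mul_pow, ← hu_def]
    have : u ^ (a - 1) * u ^ (r - a) = u ^ (r - 1) := by
      rw [← pow_add]; congr 1; omega
    calc (cCoeff a m' r : ℚ) * (y ^ (a - 1) * u ^ (a - 1) * u ^ (r - a))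
        = (cCoeff a m' r : ℚ) * y ^ (a - 1) * (u ^ (a - 1) * u ^ (r - a)) := by ring
      _ = (cCoeff a m' r : ℚ) * y ^ (a - 1) * u ^ (r - 1) := by rw [this]
  have hval : (1 - y) ^ (m' - 1) * (1 + y) ^ (r - m') * u ^ (r - 1)
      = 2 ^ (r - 1) * x ^ (m' - 1) := by
    rw [h1y, h2y]
    obtain ⟨p, hp⟩ : ∃ p, p = m' - 1 := ⟨m' - 1, rfl⟩
    obtain ⟨q, hq⟩ : ∃ q, q = r - m' := ⟨r - m', rfl⟩
    have hpq : r - 1 = p + q := by omega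
    rw [← hp, ← hq, hpq]
    rw [div_pow, div_pow, pow_add, mul_pow]
    field_simp
    ring
  calc Polynomial.eval x (∑ a ∈ Finset.Icc 1 r,
        C ((cCoeff a m' r : ℚ)) * ((1 - X) ^ (a - 1) * (1 + X) ^ (r - a)))
      = ∑ a ∈ Finset.Icc 1 r,
        (cCoeff a m' r : ℚ) * ((1 - x) ^ (a - 1) * (1 + x) ^ (r - a)) := by
        simp [eval_finset_sum]
    _ = (1 - y) ^ (m' - 1) * (1 + y) ^ (r - m') * u ^ (r - 1) := by rw [hsum, ← hQ]
    _ = 2 ^ (r - 1) * x ^ (m' - 1) := hval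
    _ = Polynomial.eval x (C ((2 : ℚ) ^ (r - 1)) * X ^ (m' - 1)) := by simp

/-- Orthogonality/inversion relation:
`Σ_{a+b=r+1, a,b≥1} c_{m,a}^{(r)}·c_{a,m'}^{(r)} = 2^{r−1}·δ_{m,m'}` for `1 ≤ m, m' ≤ r`. -/
theorem cCoeff_orthogonality (r m m' : ℕ) (hm1 : 1 ≤ m) (hmr : m ≤ r)
    (hm'1 : 1 ≤ m') (hm'r : m' ≤ r) :
    ∑ a ∈ Finset.Icc 1 r, cCoeff m a r * cCoeff a m' r
      = if m = m' then 2 ^ (r - 1) else 0 := by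
  have key : (∑ a ∈ Finset.Icc 1 r, (cCoeff m a r : ℚ) * (cCoeff a m' r : ℚ))
      = if m = m' then (2 : ℚ) ^ (r - 1) else 0 := by
    have step : ∀ a ∈ Finset.Icc 1 r,
        (cCoeff m a r : ℚ) * (cCoeff a m' r : ℚ)
          = (C ((cCoeff a m' r : ℚ)) * ((1 - X) ^ (a - 1) * (1 + X) ^ (r - a)
              : ℚ[X])).coeff (m - 1) := by
      intro a ha
      rw [cCoeff_eq_coeff m a r hm1, coeff_C_mul]
      ring
    rw [Finset.sum_congr rfl step, ← finset_sum_coeff, key_poly m' r hm'1 hm'r,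
      coeff_C_mul, coeff_X_pow]
    by_cases h : m = m'
    · simp [h]
    · simp [h, show ¬(m' - 1 = m - 1) from by omega, show ¬(m - 1 = m' - 1) from by omega]
  have := key
  push_cast at this
  exact_mod_cast this
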